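/- Consistent load model (Theorem 2). Fix ω0 ∈ ℝ with ω0 ≠ 0. Let i_l : ℝ² → ℝ² be continuously differentiable with i_l(0) = 0 and i_l(w)ᵀw ≥ 0 for all w ∈ ℝ². Suppose i_l is consistent with the synchronous steady state, i.e. for every w0 ∈ ℝ² the curve t ↦ i_l(R(ω0 t)·w0) satisfies d/dt i_l(R(ω0 t)·w0) = ω0·j·i_l(R(ω0 t)·w0) for all t ∈ ℝ. Then there exist functions g : ℝ_{≥0} → ℝ_{≥0} and b : ℝ_{≥0} → ℝ such that i_l(w) = (g(‖w‖)·I₂ + b(‖w‖)·j)·w for all w ∈ ℝ². -/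

import Mathlib

noncomputable section
open Matrix

/-- Vectors in ℝ². -/
abbrev V2 : Type := Fin 2 → ℝ
/-- 2×2 real matrices. -/
abbrev M2 : Type := Matrix (Fin 2) (Fin 2) ℝ

/-- The 90° rotation matrix `j`. -/
def j2 : M2 := !![0, -1; 1, 0]

/-- The rotation matrix `R(θ)`. -/
def Rot (θ : ℝ) : M2 := !![Real.cos θ, -Real.sin θ; Real.sin θ, Real.cos θ]

/-- The unit vector `r(θ) = (cos θ, sin θ)`. -/
def rvec (θ : ℝ) : V2 := ![Real.cos θ, Real.sin θ]

/-- The Euclidean norm on ℝ². -/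
def enorm2 (w : V2) : ℝ := Real.sqrt (w 0 ^ 2 + w 1 ^ 2)

lemma j2_mulVec (v : V2) : j2 *ᵥ v = ![-(v 1), v 0] := by
  funext i
  fin_cases i <;> simp [j2, Matrix.mulVec, dotProduct, Fin.sum_univ_two]

lemma rot_mulVec (θ : ℝ) (v : V2) :
    Rot θ *ᵥ v = ![Real.cos θ * v 0 - Real.sin θ * v 1,
                   Real.sin θ * v 0 + Real.cos θ * v 1] := by
  funext i
  fin_cases i <;>
    simp [Rot, Matrix.mulVec, dotProduct, Fin.sum_univ_two] <;> ring

/-- **Theorem 2, consistent load model.** Let ω₀ ≠ 0 and let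
i_l : ℝ² → ℝ² be C¹ with i_l(0) = 0 and i_l(w)ᵀw ≥ 0. If i_l is consistent with the
synchronous steady state, i.e. d/dt i_l(R(ω₀t)w₀) = ω₀ j i_l(R(ω₀t)w₀) along every
synchronous trajectory, then i_l(w) = (g(‖w‖) I₂ + b(‖w‖) j) w for some
g : ℝ≥0 → ℝ≥0 and b : ℝ≥0 → ℝ. -/
theorem consistent_load_model (ω0 : ℝ) (hω0 : ω0 ≠ 0) (il : V2 → V2)
    (hil : ContDiff ℝ 1 il) (hzero : il 0 = 0) (hdiss : ∀ w : V2, 0 ≤ il w ⬝ᵥ w)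
    (hcurve : ∀ (w0 : V2) (t : ℝ),
      HasDerivAt (fun s => il (Rot (ω0 * s) *ᵥ w0))
        (ω0 • (j2 *ᵥ il (Rot (ω0 * t) *ᵥ w0))) t) :
    ∃ g b : ℝ → ℝ, (∀ s : ℝ, 0 ≤ s → 0 ≤ g s) ∧
      ∀ w : V2, il w = g (enorm2 w) • w + b (enorm2 w) • (j2 *ᵥ w) := by
  -- Equivariance: il (Rot θ *ᵥ w0) = Rot θ *ᵥ il w0
  have key : ∀ (θ : ℝ) (w0 : V2), il (Rot θ *ᵥ w0) = Rot θ *ᵥ il w0 := by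
    intro θ w0
    set c : ℝ → V2 := fun s => il (Rot (ω0 * s) *ᵥ w0) with hc_def
    have hc0 : ∀ t : ℝ, HasDerivAt (fun s => c s 0) (-(ω0 * c t 1)) t := by
      intro t
      have h := (hasDerivAt_pi.1 (hcurve w0 t)) 0
      exact h.congr_deriv (by rw [Pi.smul_apply, j2_mulVec]; simp [c])
    have hc1 : ∀ t : ℝ, HasDerivAt (fun s => c s 1) (ω0 * c t 0) t := by
      intro t
      have h := (hasDerivAt_pi.1 (hcurve w0 t)) 1
      exact h.congr_deriv (by rw [Pi.smul_apply, j2_mulVec]; simp [c])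
    have hlin : ∀ t : ℝ, HasDerivAt (fun s : ℝ => ω0 * s) ω0 t := by
      intro t
      simpa using (hasDerivAt_id t).const_mul ω0
    -- both "unrotated" components are constant
    have hf0 : ∀ t : ℝ, HasDerivAt
        (fun s => Real.cos (ω0 * s) * c s 0 + Real.sin (ω0 * s) * c s 1) 0 t := by
      intro t
      have hcos : HasDerivAt (fun s : ℝ => Real.cos (ω0 * s))
          (-Real.sin (ω0 * t) * ω0) t :=
        (Real.hasDerivAt_cos (ω0 * t)).comp t (hlin t)
      have hsin : HasDerivAt (fun s : ℝ => Real.sin (ω0 * s))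
          (Real.cos (ω0 * t) * ω0) t :=
        (Real.hasDerivAt_sin (ω0 * t)).comp t (hlin t)
      have := (hcos.mul (hc0 t)).add (hsin.mul (hc1 t))
      exact this.congr_deriv (by ring)
    have hf1 : ∀ t : ℝ, HasDerivAt
        (fun s => -Real.sin (ω0 * s) * c s 0 + Real.cos (ω0 * s) * c s 1) 0 t := by
      intro t
      have hcos : HasDerivAt (fun s : ℝ => Real.cos (ω0 * s))
          (-Real.sin (ω0 * t) * ω0) t :=
        (Real.hasDerivAt_cos (ω0 * t)).comp t (hlin t)
      have hsin : HasDerivAt (fun s : ℝ => -Real.sin (ω0 * s))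
          (-(Real.cos (ω0 * t) * ω0)) t :=
        ((Real.hasDerivAt_sin (ω0 * t)).comp t (hlin t)).neg
      have := (hsin.mul (hc0 t)).add (hcos.mul (hc1 t))
      exact this.congr_deriv (by ring)
    have const0 : ∀ t : ℝ,
        Real.cos (ω0 * t) * c t 0 + Real.sin (ω0 * t) * c t 1 = c 0 0 := by
      intro t
      have := is_const_of_deriv_eq_zero (f := fun s =>
          Real.cos (ω0 * s) * c s 0 + Real.sin (ω0 * s) * c s 1)
        (fun s => (hf0 s).differentiableAt) (fun s => (hf0 s).deriv) t 0
      simpa using this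
    have const1 : ∀ t : ℝ,
        -Real.sin (ω0 * t) * c t 0 + Real.cos (ω0 * t) * c t 1 = c 0 1 := by
      intro t
      have := is_const_of_deriv_eq_zero (f := fun s =>
          -Real.sin (ω0 * s) * c s 0 + Real.cos (ω0 * s) * c s 1)
        (fun s => (hf1 s).differentiableAt) (fun s => (hf1 s).deriv) t 0
      simpa using this
    -- specialize to t = θ / ω0
    set t := θ / ω0 with ht_def
    have hθ : ω0 * t = θ := by
      rw [mul_comm]; exact div_mul_cancel₀ θ hω0
    have hw00 : Rot (ω0 * 0) *ᵥ w0 = w0 := by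
      funext i
      fin_cases i <;> simp [rot_mulVec, Rot, Matrix.vecHead, Matrix.vecTail]
    have hc00 : c 0 = il w0 := by
      show il (Rot (ω0 * 0) *ᵥ w0) = il w0
      rw [hw00]
    have e0 := const0 t
    have e1 := const1 t
    rw [hθ, hc00] at e0 e1
    have hct : c t = il (Rot θ *ᵥ w0) := by rw [hc_def]; simp [hθ]
    rw [hct] at e0 e1
    have hpyth := Real.sin_sq_add_cos_sq θ
    rw [rot_mulVec θ (il w0)]
    funext i
    fin_cases i
    · show il (Rot θ *ᵥ w0) 0 = Real.cos θ * il w0 0 - Real.sin θ * il w0 1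
      linear_combination Real.cos θ * e0 - Real.sin θ * e1 -
        il (Rot θ *ᵥ w0) 0 * hpyth
    · show il (Rot θ *ᵥ w0) 1 = Real.sin θ * il w0 0 + Real.cos θ * il w0 1
      linear_combination Real.sin θ * e0 + Real.cos θ * e1 -
        il (Rot θ *ᵥ w0) 1 * hpyth
  -- define g and b
  refine ⟨fun s => il ![s, 0] 0 / s, fun s => il ![s, 0] 1 / s, ?_, ?_⟩
  · intro s hs
    rcases eq_or_lt_of_le hs with h | h
    · have : (![(0:ℝ), 0] : V2) = 0 := by funext i; fin_cases i <;> simp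
      simp [← h, this, hzero]
    · have hd := hdiss ![s, 0]
      have hd' : 0 ≤ il ![s, 0] 0 * s := by
        simpa [dotProduct, Fin.sum_univ_two] using hd
      have : 0 ≤ il ![s, 0] 0 := by nlinarith
      exact div_nonneg this h.le
  · intro w
    by_cases hw : w = 0
    · subst hw
      have h0 : enorm2 (0 : V2) = 0 := by simp [enorm2]
      simp [hzero, h0]
    · set s := enorm2 w with hs_def
      have hs0 : 0 < w 0 ^ 2 + w 1 ^ 2 := by
        rcases lt_or_eq_of_le (by positivity : (0:ℝ) ≤ w 0 ^ 2 + w 1 ^ 2) with h | h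
        · exact h
        · exfalso
          apply hw
          funext i
          have h0 : w 0 ^ 2 = 0 := by nlinarith [sq_nonneg (w 0), sq_nonneg (w 1)]
          have h1 : w 1 ^ 2 = 0 := by nlinarith [sq_nonneg (w 0), sq_nonneg (w 1)]
          fin_cases i <;> simpa using pow_eq_zero_iff two_ne_zero |>.mp (by assumption)
      have hspos : 0 < s := by
        rw [hs_def, enorm2]; positivity
      have hsne : s ≠ 0 := ne_of_gt hspos
      have hssq : s ^ 2 = w 0 ^ 2 + w 1 ^ 2 := by
        rw [hs_def, enorm2]
        rw [Real.sq_sqrt (by positivity)]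
      set z : ℂ := ⟨w 0, w 1⟩ with hz_def
      have hzne : z ≠ 0 := by
        intro h
        have hre : w 0 = 0 := by simpa using congrArg Complex.re h
        have him : w 1 = 0 := by simpa using congrArg Complex.im h
        exact hw (funext fun i => by fin_cases i <;> simp [hre, him])
      have habs : ‖z‖ = s := by
        rw [Complex.norm_def, Complex.normSq_apply]
        show Real.sqrt (w 0 * w 0 + w 1 * w 1) = s
        rw [hs_def, enorm2]
        congr 1
        ring
      set θ := Complex.arg z with hθ_def
      have hcos : Real.cos θ = w 0 / s := by
        rw [hθ_def, Complex.cos_arg hzne, habs]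
      have hsin : Real.sin θ = w 1 / s := by
        rw [hθ_def, Complex.sin_arg, habs]
      have hwθ : Rot θ *ᵥ ![s, 0] = w := by
        rw [rot_mulVec]
        funext i
        fin_cases i
        · show Real.cos θ * s - Real.sin θ * 0 = w 0
          rw [hcos]; field_simp; simp
        · show Real.sin θ * s + Real.cos θ * 0 = w 1
          rw [hsin]; field_simp; simp
      have hkey := key θ ![s, 0]
      rw [hwθ] at hkey
      rw [hkey, rot_mulVec, j2_mulVec]
      funext i
      fin_cases i
      · show Real.cos θ * il ![s, 0] 0 - Real.sin θ * il ![s, 0] 1 =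
          il ![s, 0] 0 / s * w 0 + il ![s, 0] 1 / s * (-(w 1))
        rw [hcos, hsin]
        field_simp
        ring
      · show Real.sin θ * il ![s, 0] 0 + Real.cos θ * il ![s, 0] 1 =
          il ![s, 0] 0 / s * w 1 + il ![s, 0] 1 / s * w 0
        rw [hcos, hsin]
        field_simp
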